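/- For any nonempty finite set S of binary strings of length N, there exist a string s ∈ {0,1}^N and a permutation σ of {1,…,N} such that for every p ∈ {1,…,N}, the set S_p = {y ∈ S : y_{σ(i)} = s_{σ(i)} for all 1 ≤ i ≤ p−1, and y_{σ(p)} ≠ s_{σ(p)}} satisfies |S_p| ≤ |S| / max{2, p}. -/

import Mathlib

open Finset

private def Fset {N : ℕ} (S : Finset (Fin N → Bool)) (s : Fin N → Bool)
    (σ : Equiv.Perm (Fin N)) (p : Fin N) : Finset (Fin N → Bool) :=
  S.filter (fun y =>
    (∀ i : Fin N, i < p → y (σ i) = s (σ i)) ∧ y (σ p) ≠ s (σ p))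

private def mu {N : ℕ} (S : Finset (Fin N → Bool)) (i : Fin N) : ℕ :=
  min (S.filter fun y => y i = false).card (S.filter fun y => y i = true).card

private lemma two_mul_mu_le {N : ℕ} (S : Finset (Fin N → Bool)) (i : Fin N) :
    2 * mu S i ≤ S.card := by
  have h := Finset.card_filter_add_card_filter_not (s := S)
    (p := fun y => y i = false)
  have he : (S.filter fun y => ¬ y i = false) = S.filter fun y => y i = true := by
    apply filter_congr; intro y _; simp
  rw [he] at h
  have h1 : mu S i ≤ (S.filter fun y => y i = false).card := min_le_left _ _
  have h2 : mu S i ≤ (S.filter fun y => y i = true).card := min_le_right _ _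
  calc 2 * mu S i = mu S i + mu S i := by ring
    _ ≤ (S.filter fun y => y i = false).card + (S.filter fun y => y i = true).card :=
        Nat.add_le_add h1 h2
    _ = S.card := h

private lemma mu_le_filter_ne {N : ℕ} (S : Finset (Fin N → Bool)) (i : Fin N) (b : Bool) :
    mu S i ≤ (S.filter fun y => y i ≠ b).card := by
  cases b with
  | false =>
    have he : (S.filter fun y => y i ≠ false) = S.filter fun y => y i = true := by
      apply filter_congr; intro y _; simp
    rw [he]; exact min_le_right _ _
  | true =>
    have he : (S.filter fun y => y i ≠ true) = S.filter fun y => y i = false := by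
      apply filter_congr; intro y _; simp
    rw [he]; exact min_le_left _ _

private lemma exists_minority {N : ℕ} (S : Finset (Fin N → Bool)) (i : Fin N) :
    ∃ b : Bool, (S.filter fun y => y i ≠ b).card = mu S i := by
  rcases le_total ((S.filter fun y => y i = false).card)
      ((S.filter fun y => y i = true).card) with h | h
  · refine ⟨true, ?_⟩
    have he : (S.filter fun y => y i ≠ true) = S.filter fun y => y i = false := by
      apply filter_congr; intro y _; simp
    rw [he, mu, min_eq_left h]
  · refine ⟨false, ?_⟩
    have he : (S.filter fun y => y i ≠ false) = S.filter fun y => y i = true := by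
      apply filter_congr; intro y _; simp
    rw [he, mu, min_eq_right h]

private lemma mu_mono {N : ℕ} {S T : Finset (Fin N → Bool)} (h : T ⊆ S) (i : Fin N) :
    mu T i ≤ mu S i :=
  min_le_min (card_le_card (filter_subset_filter _ h)) (card_le_card (filter_subset_filter _ h))

private lemma injOn_removeNth {N : ℕ} {i0 : Fin (N + 1)} {b0 : Bool}
    {T : Finset (Fin (N + 1) → Bool)} (hT : ∀ y ∈ T, y i0 = b0) :
    Set.InjOn (fun y : Fin (N + 1) → Bool => Fin.removeNth i0 y) (↑T : Set (Fin (N + 1) → Bool)) := by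
  intro y1 h1 y2 h2 h
  have e1 := Fin.insertNth_self_removeNth i0 y1
  have e2 := Fin.insertNth_self_removeNth i0 y2
  rw [hT y1 h1] at e1
  rw [hT y2 h2] at e2
  rw [← e1, ← e2]
  exact congrArg (fun z : Fin N → Bool => Fin.insertNth (α := fun _ => Bool) i0 b0 z) h

private lemma card_filter_image {N : ℕ} {i0 : Fin (N + 1)} {b0 : Bool}
    {T : Finset (Fin (N + 1) → Bool)} (hT : ∀ y ∈ T, y i0 = b0)
    (P : (Fin N → Bool) → Prop) [DecidablePred P] :
    ((T.image (Fin.removeNth i0)).filter P).card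
      = (T.filter fun y => P (Fin.removeNth i0 y)).card := by
  rw [Finset.filter_image]
  exact Finset.card_image_of_injOn
    ((injOn_removeNth hT).mono (by exact_mod_cast filter_subset _ _))

private theorem aux (N : ℕ) (S : Finset (Fin N → Bool)) :
    ∃ (s : Fin N → Bool) (σ : Equiv.Perm (Fin N)),
      ∀ p : Fin N,
        (Fset S s σ p).card * max 2 ((p : ℕ) + 1) ≤ S.card ∧
        ∀ h0 : 0 < N,
          (Fset S s σ p).card ≤ (Fset S s σ ⟨0, h0⟩).card ∧
          ∃ j : Fin N, (Fset S s σ ⟨0, h0⟩).card ≤ mu S j := by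
  induction N with
  | zero => exact ⟨(fun i => i.elim0), 1, fun p => p.elim0⟩
  | succ N IH =>
    obtain ⟨i0, -, hi0⟩ := exists_max_image (univ : Finset (Fin (N + 1))) (mu S)
      ⟨0, mem_univ _⟩
    obtain ⟨b0, hb0⟩ := exists_minority S i0
    set T : Finset (Fin (N + 1) → Bool) := S.filter (fun y => y i0 = b0) with hTdef
    have hTmem : ∀ y ∈ T, y i0 = b0 := fun y hy => (mem_filter.mp hy).2
    set T' : Finset (Fin N → Bool) := T.image (Fin.removeNth i0) with hT'def
    obtain ⟨s', σ', hIH⟩ := IH T'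
    set s : Fin (N + 1) → Bool := Fin.insertNth i0 b0 s' with hsdef
    set σ : Equiv.Perm (Fin (N + 1)) :=
      (finSuccEquiv' (0 : Fin (N + 1))).trans
        ((Equiv.optionCongr σ').trans (finSuccEquiv' i0).symm) with hσdef
    have hσ0 : σ 0 = i0 := by
      simp [hσdef]
    have hσs : ∀ j : Fin N, σ j.succ = i0.succAbove (σ' j) := by
      intro j
      have h1 : finSuccEquiv' (0 : Fin (N + 1)) j.succ = some j := by
        rw [← Fin.zero_succAbove j, finSuccEquiv'_succAbove]
      simp [hσdef, h1]
    have hs0 : s i0 = b0 := by simp [hsdef]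
    have hss : ∀ j : Fin N, s (i0.succAbove j) = s' j := by
      intro j; simp [hsdef]
    -- card T' = card T
    have hcardT' : T'.card = T.card :=
      Finset.card_image_of_injOn (injOn_removeNth hTmem)
    -- card S = T.card + mu S i0
    have hcardS : S.card = T.card + mu S i0 := by
      have h := Finset.card_filter_add_card_filter_not (s := S)
        (p := fun y => y i0 = b0)
      have he : (S.filter fun y => ¬ y i0 = b0) = S.filter fun y => y i0 ≠ b0 := rfl
      rw [he, hb0] at h
      rw [hTdef]
      exact h.symm
    -- mu T' j ≤ mu S i0
    have hmuT' : ∀ j : Fin N, mu T' j ≤ mu S i0 := by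
      intro j
      have h1 : mu T' j = mu T (i0.succAbove j) := by
        unfold mu
        rw [hT'def, card_filter_image hTmem (fun z => z j = false),
          card_filter_image hTmem (fun z => z j = true)]
        rfl
      calc mu T' j = mu T (i0.succAbove j) := h1
        _ ≤ mu S (i0.succAbove j) := mu_mono (filter_subset _ _) _
        _ ≤ mu S i0 := hi0 _ (mem_univ _)
    -- Fset at zero
    have hF0 : Fset S s σ 0 = S.filter (fun y => y i0 ≠ b0) := by
      unfold Fset
      apply filter_congr
      intro y _
      simp [hσ0, hs0]
    have hF0card : (Fset S s σ 0).card = mu S i0 := by rw [hF0, hb0]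
    -- key step: card of Fset at succ
    have hkey : ∀ q : Fin N,
        (Fset S s σ q.succ).card = (Fset T' s' σ' q).card := by
      intro q
      have hstepA : Fset S s σ q.succ = T.filter (fun y =>
          (∀ j : Fin N, j < q → y (i0.succAbove (σ' j)) = s' (σ' j)) ∧
            y (i0.succAbove (σ' q)) ≠ s' (σ' q)) := by
        ext y
        simp only [Fset, mem_filter, hTdef]
        constructor
        · rintro ⟨hyS, hall, hne⟩
          have h0 := hall 0 (Fin.succ_pos q)
          rw [hσ0, hs0] at h0
          refine ⟨⟨hyS, h0⟩, ?_, ?_⟩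
          · intro j hj
            have h := hall j.succ (by rwa [Fin.succ_lt_succ_iff])
            rwa [hσs j, hss (σ' j)] at h
          · rw [hσs q, hss (σ' q)] at hne
            exact hne
        · rintro ⟨⟨hyS, hb⟩, hall, hne⟩
          refine ⟨hyS, ?_, by rw [hσs q, hss (σ' q)]; exact hne⟩
          intro i hi
          induction i using Fin.cases with
          | zero => rw [hσ0, hs0]; exact hb
          | succ j => rw [hσs j, hss (σ' j)]; exact hall j (Fin.succ_lt_succ_iff.mp hi)
      have hstepB : (Fset T' s' σ' q).card = (T.filter (fun y =>
          (∀ j : Fin N, j < q → y (i0.succAbove (σ' j)) = s' (σ' j)) ∧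
            y (i0.succAbove (σ' q)) ≠ s' (σ' q))).card := by
        unfold Fset
        rw [hT'def, card_filter_image hTmem (fun z =>
          (∀ j : Fin N, j < q → z (σ' j) = s' (σ' j)) ∧ z (σ' q) ≠ s' (σ' q))]
        rfl
      rw [hstepA, hstepB]
    refine ⟨s, σ, ?_⟩
    intro p
    induction p using Fin.cases with
    | zero =>
      refine ⟨?_, ?_⟩
      · rw [hF0card]
        have hv : (((0 : Fin (N + 1)) : ℕ) + 1) = 1 := rfl
        rw [hv]
        have h2 : max 2 1 = 2 := rfl
        rw [h2, mul_comm]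
        exact two_mul_mu_le S i0
      · intro h0
        have h00 : (⟨0, h0⟩ : Fin (N + 1)) = 0 := rfl
        rw [h00]
        exact ⟨le_refl _, ⟨i0, le_of_eq hF0card⟩⟩
    | succ q =>
      have h0 : (0 : ℕ) < N + 1 := Nat.succ_pos N
      have h00 : (⟨0, h0⟩ : Fin (N + 1)) = 0 := rfl
      have hq0 : (0 : ℕ) < N := q.pos
      obtain ⟨hIHmain, hIHrest⟩ := hIH q
      obtain ⟨hIHb, j, hIHc⟩ := hIHrest hq0
      have hkq := hkey q
      -- k ≤ mu S i0
      have hkm : (Fset S s σ q.succ).card ≤ mu S i0 := by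
        calc (Fset S s σ q.succ).card = (Fset T' s' σ' q).card := hkq
          _ ≤ (Fset T' s' σ' ⟨0, hq0⟩).card := hIHb
          _ ≤ mu T' j := hIHc
          _ ≤ mu S i0 := hmuT' j
      refine ⟨?_, ?_⟩
      · -- main bound
        have hIHmain' : (Fset S s σ q.succ).card * max 2 ((q : ℕ) + 1) ≤ T.card := by
          rw [hkq, ← hcardT']; exact hIHmain
        have hsv : ((q.succ : Fin (N + 1)) : ℕ) = (q : ℕ) + 1 := Fin.val_succ q
        rw [hsv]
        have hmax1 : max 2 ((q : ℕ) + 1 + 1) = (q : ℕ) + 1 + 1 :=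
          max_eq_right (Nat.add_le_add_right (Nat.le_add_left 1 (q : ℕ)) 1)
        have hmax2 : (q : ℕ) + 1 + 1 ≤ max 2 ((q : ℕ) + 1) + 1 :=
          Nat.add_le_add_right (Nat.le_max_right 2 ((q : ℕ) + 1)) 1
        calc (Fset S s σ q.succ).card * max 2 ((q : ℕ) + 1 + 1)
            ≤ (Fset S s σ q.succ).card * (max 2 ((q : ℕ) + 1) + 1) := by
              rw [hmax1]; exact Nat.mul_le_mul_left _ hmax2
          _ = (Fset S s σ q.succ).card * max 2 ((q : ℕ) + 1) + (Fset S s σ q.succ).card :=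
              Nat.mul_succ _ _
          _ ≤ T.card + mu S i0 := Nat.add_le_add hIHmain' hkm
          _ = S.card := hcardS.symm
      · intro h0'
        have h00' : (⟨0, h0'⟩ : Fin (N + 1)) = 0 := rfl
        rw [h00', hF0card]
        exact ⟨hkm, ⟨i0, le_refl _⟩⟩

theorem ordering_lemma (N : ℕ) (S : Finset (Fin N → Bool)) (hS : S.Nonempty) :
    ∃ (s : Fin N → Bool) (σ : Equiv.Perm (Fin N)),
      ∀ p : Fin N,
        ((S.filter (fun y =>
            (∀ i : Fin N, i < p → y (σ i) = s (σ i)) ∧ y (σ p) ≠ s (σ p))).card : ℝ)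
          ≤ (S.card : ℝ) / max 2 ((p : ℕ) + 1) := by
  obtain ⟨s, σ, h⟩ := aux N S
  refine ⟨s, σ, ?_⟩
  intro p
  have hmain := (h p).1
  have hpos : (0 : ℝ) < max 2 ((p : ℕ) + 1) := by positivity
  rw [le_div_iff₀ hpos]
  have : ((Fset S s σ p).card : ℝ) * ((max 2 ((p : ℕ) + 1) : ℕ) : ℝ)
      ≤ (S.card : ℝ) := by exact_mod_cast hmain
  rw [Nat.cast_max] at this
  convert this using 3 <;> norm_num <;> rfl
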